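/- arXiv:1703.03155 — 5 statements merged into one kernel-verified Lean document; each statement's English description precedes it below -/
import Mathlib

section
/- Every feasible solution of the SDP relaxation projects to a feasible solution of the continuous (SOCP) relaxation with equal objective value; consequently OPT_SDP ≤ OPT_SOCP. Specifically, if y ∈ ℝ^{|V|} and Y ∈ S^{|V|} are feasible for the SDP relaxation (with constraints eᵀy = N̄, A_{VV}·Y + 2c̄ᵀy ≤ 2θ̄, Y_ii = 1, (e eᵀ)·Y = N̄², and [[1,yᵀ],[y,Y]] ⪰ 0), then x_V := (y + e)/(2N) satisfies eᵀx_V + eᵀc_F = 1, 0 ≤ (x_V)_i ≤ 1/N for all i, and x := (x_V, c_F) satisfies xᵀAx ≤ 2θ. -/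
open Matrix BigOperators Finset

lemma diag_nonneg_of_psd' {n : Type*} [Fintype n] [DecidableEq n]
    {Q : Matrix n n ℝ} (hQ : Q.PosSemidef) (i : n) : 0 ≤ Q i i := by
  have := hQ.dotProduct_mulVec_nonneg (Pi.single i 1)
  simpa [mulVec, dotProduct, Pi.single_apply] using this

open scoped MatrixOrder in
lemma trace_pair_nonneg' {n : Type*} [Fintype n] [DecidableEq n]
    {P M : Matrix n n ℝ} (hP : P.PosSemidef) (hM : M.PosSemidef) :
    0 ≤ ∑ i, ∑ j, P i j * M i j := by
  have hS : CFC.sqrt M * CFC.sqrt M = M := CFC.sqrt_mul_sqrt_self M hM.nonneg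
  have hSh : (CFC.sqrt M).conjTranspose = CFC.sqrt M := (CFC.sqrt_nonneg M).posSemidef.1
  have hQ : ((CFC.sqrt M)ᴴ * P * CFC.sqrt M).PosSemidef := hP.conjTranspose_mul_mul_same _
  rw [hSh] at hQ
  have h1 : ∑ i, ∑ j, P i j * M i j = (P * M).trace := by
    have hMsym : ∀ i j, M j i = M i j := fun i j => by
      simpa using hM.isHermitian.apply i j
    simp only [Matrix.trace, Matrix.diag, Matrix.mul_apply]
    apply Finset.sum_congr rfl; intro i _
    apply Finset.sum_congr rfl; intro j _
    rw [hMsym i j]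
  rw [h1, ← hS, ← Matrix.mul_assoc, Matrix.trace_mul_cycle]
  rw [Matrix.mul_assoc] at hQ ⊢
  calc (0:ℝ) ≤ ∑ i, (CFC.sqrt M * (P * CFC.sqrt M)) i i :=
        Finset.sum_nonneg fun i _ => diag_nonneg_of_psd' hQ i
    _ = (CFC.sqrt M * (P * CFC.sqrt M)).trace := rfl

lemma qform' (v : ℕ) (y : Fin v → ℝ) (Y : Matrix (Fin v) (Fin v) ℝ)
    (a : ℝ) (z : Fin v → ℝ) :
    (Sum.elim (fun _ : Unit => a) z) ⬝ᵥ (Matrix.fromBlocks (1 : Matrix Unit Unit ℝ)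
      (Matrix.replicateRow Unit y) (Matrix.replicateCol Unit y) Y) *ᵥ (Sum.elim (fun _ : Unit => a) z)
    = a^2 + 2*a*(y ⬝ᵥ z) + z ⬝ᵥ Y *ᵥ z := by
  simp [Matrix.fromBlocks_mulVec, sumElim_dotProduct_sumElim, dotProduct_add,
    Matrix.mulVec, dotProduct, Matrix.replicateRow_apply, Matrix.replicateCol_apply, Finset.mul_sum,
    Finset.sum_add_distrib]
  simp only [mul_add, Finset.sum_add_distrib, Finset.mul_sum]
  ring_nf
  have h : ∑ x, a*y x*z x + ∑ x, a*z x*y x = ∑ x, a*y x*z x*2 := by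
    rw [← Finset.sum_add_distrib]; exact Finset.sum_congr rfl fun i _ => by ring
  linarith

lemma dot_swap' {m n : Type*} [Fintype m] [Fintype n] (B : Matrix m n ℝ)
    (u : m → ℝ) (w : n → ℝ) : u ⬝ᵥ B *ᵥ w = w ⬝ᵥ Bᵀ *ᵥ u := by
  rw [Matrix.dotProduct_mulVec, ← Matrix.mulVec_transpose, dotProduct_comm]

/-- Every feasible solution `(y, Y)` of the SDP relaxation projects, via
`x_V := (y + e)/(2N)`, to a feasible solution of the continuous (SOCP)
relaxation with equal objective value; consequently `OPT_SDP ≤ OPT_SOCP`. -/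
theorem sdp_feasible_to_socp_feasible (v f N : ℕ) (hN : 0 < N)
    (A : Matrix (Fin v ⊕ Fin f) (Fin v ⊕ Fin f) ℝ) (hAsym : A.IsSymm)
    (hApd : A.PosDef) (θ : ℝ) (hθ : 0 < θ)
    (cF : Fin f → ℝ) (hcF : ∀ i, cF i = 0 ∨ cF i = 1 / N)
    (p : ℝ) (hp : p = N * ∑ i, cF i)
    (Nbar : ℝ) (hNbar : Nbar = 2 * ((N : ℝ) - p) - v)
    (cbar : Fin v → ℝ)
    (hcbar : cbar = (A.toBlocks₁₁ *ᵥ (fun _ => 1)) + (2 * N) • (A.toBlocks₁₂ *ᵥ cF))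
    (θbar : ℝ)
    (hθbar : θbar = 2 * (N : ℝ)^2 * (2 * θ - cF ⬝ᵥ A.toBlocks₂₂ *ᵥ cF)
      - (1/2) * ((fun _ => (1:ℝ)) ⬝ᵥ A.toBlocks₁₁ *ᵥ (fun _ => 1))
      - 2 * N * (cF ⬝ᵥ A.toBlocks₂₁ *ᵥ (fun _ => 1)))
    (y : Fin v → ℝ) (Y : Matrix (Fin v) (Fin v) ℝ)
    (hsum : ∑ i, y i = Nbar)
    (hquad : (∑ i, ∑ j, A.toBlocks₁₁ i j * Y i j) + 2 * (cbar ⬝ᵥ y) ≤ 2 * θbar)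
    (hdiag : ∀ i, Y i i = 1)
    (hYsum : ∑ i, ∑ j, Y i j = Nbar ^ 2)
    (hpsd : (Matrix.fromBlocks (1 : Matrix Unit Unit ℝ) (Matrix.replicateRow Unit y)
      (Matrix.replicateCol Unit y) Y).PosSemidef)
    (xV : Fin v → ℝ) (hxV : xV = fun i => (y i + 1) / (2 * N))
    (x : Fin v ⊕ Fin f → ℝ) (hx : x = Sum.elim xV cF) :
    (∑ i, xV i) + (∑ i, cF i) = 1 ∧
    (∀ i, 0 ≤ xV i ∧ xV i ≤ 1 / N) ∧
    x ⬝ᵥ A *ᵥ x ≤ 2 * θ := by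
  have hNpos : (0:ℝ) < N := by exact_mod_cast hN
  have hNne : (N:ℝ) ≠ 0 := ne_of_gt hNpos
  -- Part 1
  have hcsum : ∑ i, cF i = p / N := by rw [hp]; field_simp
  have hpart1 : (∑ i, xV i) + (∑ i, cF i) = 1 := by
    have hsx : ∑ i, xV i = (Nbar + v) / (2*N) := by
      rw [hxV, ← Finset.sum_div]
      congr 1
      rw [Finset.sum_add_distrib, hsum]
      simp
    rw [hsx, hcsum, hNbar]
    field_simp
    ring
  refine ⟨hpart1, ?_, ?_⟩
  -- Part 2
  · intro i
    have h1 := hpsd.dotProduct_mulVec_nonneg (Sum.elim (fun _ : Unit => (1:ℝ)) (Pi.single i 1))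
    have h2 := hpsd.dotProduct_mulVec_nonneg (Sum.elim (fun _ : Unit => (1:ℝ)) (-Pi.single i 1))
    simp only [star_trivial] at h1 h2
    rw [qform'] at h1 h2
    have e1 : y ⬝ᵥ Pi.single i (1:ℝ) = y i := by
      simp [dotProduct, Pi.single_apply]
    have e2 : (Pi.single i (1:ℝ)) ⬝ᵥ Y *ᵥ (Pi.single i 1) = Y i i := by
      simp [dotProduct, Matrix.mulVec, Pi.single_apply, Finset.mul_sum]
    simp only [dotProduct_neg, neg_dotProduct, Matrix.mulVec_neg, neg_neg] at h2
    rw [e1, e2, hdiag i] at h1 h2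
    have hylb : -1 ≤ y i := by nlinarith
    have hyub : y i ≤ 1 := by nlinarith
    rw [hxV]
    constructor
    · apply div_nonneg (by linarith) (by positivity)
    · rw [div_le_div_iff₀ (by positivity) hNpos]
      nlinarith
  -- Part 3
  · -- symmetry facts
    have hP11 : A.toBlocks₁₁ᵀ = A.toBlocks₁₁ := by
      ext i j
      have := congrFun (congrFun hAsym (Sum.inl i)) (Sum.inl j)
      simpa [Matrix.toBlocks₁₁, Matrix.transpose_apply] using this
    have hA21 : A.toBlocks₂₁ᵀ = A.toBlocks₁₂ := by
      ext i j
      have := congrFun (congrFun hAsym (Sum.inl i)) (Sum.inr j)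
      simpa [Matrix.toBlocks₂₁, Matrix.toBlocks₁₂, Matrix.transpose_apply] using this
    have hYsym : ∀ i j, Y j i = Y i j := fun i j => by
      have h := hpsd.1.apply (Sum.inr i) (Sum.inr j)
      simpa [Matrix.fromBlocks] using h
    -- A11 is PSD
    have hPpsd : A.toBlocks₁₁.PosSemidef := by
      apply Matrix.PosSemidef.of_dotProduct_mulVec_nonneg
      · rw [Matrix.IsHermitian, Matrix.conjTranspose_eq_transpose_of_trivial]
        exact hP11
      · intro z
        have h := hApd.posSemidef.dotProduct_mulVec_nonneg (Sum.elim z (0 : Fin f → ℝ))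
        simp only [star_trivial] at h
        have key : Sum.elim z (0 : Fin f → ℝ) ⬝ᵥ A *ᵥ Sum.elim z 0
            = z ⬝ᵥ A.toBlocks₁₁ *ᵥ z := by
          conv_lhs => rw [← Matrix.fromBlocks_toBlocks A]
          rw [Matrix.fromBlocks_mulVec, sumElim_dotProduct_sumElim]
          simp
        rwa [key] at h
    -- Y - y yᵀ is PSD
    have hM0 : (Y - Matrix.vecMulVec y y).PosSemidef := by
      apply Matrix.PosSemidef.of_dotProduct_mulVec_nonneg
      · rw [Matrix.IsHermitian, Matrix.conjTranspose_eq_transpose_of_trivial]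
        ext i j
        simp only [Matrix.transpose_apply, Matrix.sub_apply, Matrix.vecMulVec_apply, hYsym j i]
        ring
      · intro z
        have h := hpsd.dotProduct_mulVec_nonneg (Sum.elim (fun _ : Unit => -(y ⬝ᵥ z)) z)
        simp only [star_trivial] at h
        rw [qform'] at h
        have hvv : z ⬝ᵥ (Y - Matrix.vecMulVec y y) *ᵥ z
            = z ⬝ᵥ Y *ᵥ z - (y ⬝ᵥ z) * (y ⬝ᵥ z) := by
          rw [Matrix.sub_mulVec, dotProduct_sub]
          congr 1
          simp only [Matrix.mulVec, Matrix.vecMulVec_apply, dotProduct, Finset.mul_sum,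
            Finset.sum_mul]
          rw [Finset.sum_comm]
          apply Finset.sum_congr rfl; intro j _
          apply Finset.sum_congr rfl; intro k _
          ring
        rw [star_trivial, hvv]
        nlinarith [h]
    -- key inequality
    have key1 : y ⬝ᵥ A.toBlocks₁₁ *ᵥ y ≤ ∑ i, ∑ j, A.toBlocks₁₁ i j * Y i j := by
      have h0 := trace_pair_nonneg' hPpsd hM0
      have hexp : ∑ i, ∑ j, A.toBlocks₁₁ i j * (Y - Matrix.vecMulVec y y) i j
          = (∑ i, ∑ j, A.toBlocks₁₁ i j * Y i j) - y ⬝ᵥ A.toBlocks₁₁ *ᵥ y := by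
        simp only [Matrix.sub_apply, Matrix.vecMulVec_apply, mul_sub,
          Finset.sum_sub_distrib]
        congr 1
        simp only [Matrix.mulVec, dotProduct, Finset.mul_sum]
        apply Finset.sum_congr rfl; intro i _
        apply Finset.sum_congr rfl; intro j _
        ring
      rw [hexp] at h0
      linarith
    -- scalar abbreviations via equalities
    set E : Fin v → ℝ := (fun _ => (1:ℝ)) with hE
    have hswap1 : E ⬝ᵥ A.toBlocks₁₁ *ᵥ y = y ⬝ᵥ A.toBlocks₁₁ *ᵥ E := by
      rw [dot_swap' _ E y, hP11]
    have hswap2 : cF ⬝ᵥ A.toBlocks₂₁ *ᵥ y = y ⬝ᵥ A.toBlocks₁₂ *ᵥ cF := by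
      rw [dot_swap' _ cF y, hA21]
    have hswap3 : cF ⬝ᵥ A.toBlocks₂₁ *ᵥ E = E ⬝ᵥ A.toBlocks₁₂ *ᵥ cF := by
      rw [dot_swap' _ cF E, hA21]
    -- rewrite hquad
    have hcy : cbar ⬝ᵥ y = y ⬝ᵥ A.toBlocks₁₁ *ᵥ E + 2*N*(y ⬝ᵥ A.toBlocks₁₂ *ᵥ cF) := by
      rw [hcbar, add_dotProduct, smul_dotProduct]
      rw [dotProduct_comm _ y, dotProduct_comm _ y, nsmul_eq_mul]
      push_cast
      ring
    rw [hcy] at hquad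
    -- expansion of the objective
    have hxv2 : xV = ((2*(N:ℝ))⁻¹) • (y + E) := by
      funext i
      rw [hxV]
      simp only [Pi.smul_apply, Pi.add_apply, smul_eq_mul, hE]
      ring
    have hexpand : x ⬝ᵥ A *ᵥ x
        = (2*(N:ℝ))⁻¹^2 * (y ⬝ᵥ A.toBlocks₁₁ *ᵥ y + 2*(y ⬝ᵥ A.toBlocks₁₁ *ᵥ E)
            + E ⬝ᵥ A.toBlocks₁₁ *ᵥ E)
          + 2*(2*(N:ℝ))⁻¹*(y ⬝ᵥ A.toBlocks₁₂ *ᵥ cF + E ⬝ᵥ A.toBlocks₁₂ *ᵥ cF)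
          + cF ⬝ᵥ A.toBlocks₂₂ *ᵥ cF := by
      rw [hx, hxv2]
      conv_lhs => rw [← Matrix.fromBlocks_toBlocks A]
      rw [Matrix.fromBlocks_mulVec, sumElim_dotProduct_sumElim]
      simp only [Sum.elim_comp_inl, Sum.elim_comp_inr, Matrix.mulVec_add, Matrix.mulVec_smul,
        dotProduct_add, add_dotProduct, dotProduct_smul, smul_dotProduct, smul_eq_mul,
        smul_add, Matrix.add_mulVec]
      rw [hswap1, hswap2, hswap3]
      ring
    rw [hexpand]
    -- final arithmetic
    set a := y ⬝ᵥ A.toBlocks₁₁ *ᵥ y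
    set b := y ⬝ᵥ A.toBlocks₁₁ *ᵥ E
    set c1 := E ⬝ᵥ A.toBlocks₁₁ *ᵥ E
    set d := y ⬝ᵥ A.toBlocks₁₂ *ᵥ cF
    set d2 := E ⬝ᵥ A.toBlocks₁₂ *ᵥ cF
    set h := cF ⬝ᵥ A.toBlocks₂₂ *ᵥ cF
    rw [hswap3] at hθbar
    have hkey : a + 2*b + c1 ≤ 8*N^2*θ - 4*N^2*h - 4*N*(d + d2) := by
      have : θbar = 2*(N:ℝ)^2*(2*θ - h) - (1/2)*c1 - 2*N*d2 := hθbar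
      linarith [key1, hquad]
    have ht : ((2*(N:ℝ))⁻¹)^2 * (8*N^2*θ - 4*N^2*h - 4*N*(d + d2))
        + 2*(2*(N:ℝ))⁻¹*(d + d2) + h = 2*θ := by
      field_simp
      ring
    have htsq : (0:ℝ) ≤ ((2*(N:ℝ))⁻¹)^2 := sq_nonneg _
    linarith [mul_le_mul_of_nonneg_left hkey htsq, ht]
end

section
/- Consider the ED problem with a penalty formulation: f_λ(x) := gᵀx − λ·max{xᵀAx − 2θ, 0} maximized over the finite set F̂ := {x ∈ ℝ^Z : eᵀx = 1, l ≤ x ≤ u, x_i ∈ {0, 1/N}}. Assume F̂ contains at least one point x with xᵀAx ≤ 2θ. Then there exists λ̂ > 0 such that for every λ ≥ λ̂, every maximizer x(λ) of f_λ over F̂ satisfies x(λ)ᵀA x(λ) ≤ 2θ and x(λ) is an optimal solution of the original ED problem (maximize gᵀx over F̂ subject to xᵀAx ≤ 2θ). -/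
open Matrix BigOperators Finset

/-- Exactness of the penalty formulation of the ED problem: there exists a
threshold `λ̂ > 0` such that for every `λ ≥ λ̂`, every maximizer of
`f_λ(x) = gᵀx − λ·max{xᵀAx − 2θ, 0}` over the finite feasible set `F̂`
satisfies the quadratic constraint and is optimal for the original ED problem. -/
theorem penalty_exactness (Z N : ℕ) (hN : 0 < N)
    (A : Matrix (Fin Z) (Fin Z) ℝ) (hAsym : A.IsSymm) (hApsd : A.PosSemidef)
    (g : Fin Z → ℝ) (θ : ℝ) (hθ : 0 < θ) (l u : Fin Z → ℝ)
    (Fhat : Set (Fin Z → ℝ))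
    (hFhat : Fhat = {x : Fin Z → ℝ | (∑ i, x i) = 1 ∧ (∀ i, l i ≤ x i ∧ x i ≤ u i) ∧
      ∀ i, x i = 0 ∨ x i = 1 / N})
    (f : ℝ → (Fin Z → ℝ) → ℝ)
    (hf : f = fun lam x => g ⬝ᵥ x - lam * max (x ⬝ᵥ A *ᵥ x - 2 * θ) 0)
    (hfeas : ∃ x ∈ Fhat, x ⬝ᵥ A *ᵥ x ≤ 2 * θ) :
    ∃ lamHat : ℝ, 0 < lamHat ∧ ∀ lam : ℝ, lamHat ≤ lam →
      ∀ xlam ∈ Fhat, (∀ x ∈ Fhat, f lam x ≤ f lam xlam) →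
        xlam ⬝ᵥ A *ᵥ xlam ≤ 2 * θ ∧
        ∀ x ∈ Fhat, x ⬝ᵥ A *ᵥ x ≤ 2 * θ → g ⬝ᵥ x ≤ g ⬝ᵥ xlam := by
  classical
  set p : (Fin Z → ℝ) → ℝ := fun x => max (x ⬝ᵥ A *ᵥ x - 2 * θ) 0 with hp
  obtain ⟨x0, hx0F, hx0⟩ := hfeas
  have hp0 : ∀ x, 0 ≤ p x := fun x => le_max_right _ _
  have hpx0 : p x0 = 0 := max_eq_right (by linarith)
  have hNpos : (0:ℝ) < (N:ℝ) := by exact_mod_cast hN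
  set B : ℝ := (∑ i, |g i|) / N with hB
  have hBnn : 0 ≤ B := by
    apply div_nonneg _ hNpos.le
    exact Finset.sum_nonneg fun i _ => abs_nonneg _
  have hgB : ∀ x ∈ Fhat, |g ⬝ᵥ x| ≤ B := by
    intro x hx
    rw [hFhat] at hx
    obtain ⟨-, -, h01⟩ := hx
    calc |g ⬝ᵥ x| ≤ ∑ i, |g i * x i| := Finset.abs_sum_le_sum_abs _ _
      _ ≤ ∑ i, |g i| / N := by
          apply Finset.sum_le_sum; intro i _
          rw [abs_mul]
          rcases h01 i with h | h
          · rw [h]; simp; positivity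
          · rw [h, abs_of_nonneg (by positivity : (0:ℝ) ≤ 1/(N:ℝ)), mul_one_div]
      _ = B := by rw [hB, Finset.sum_div]
  have hFin : Fhat.Finite := by
    apply Set.Finite.subset
      (Set.Finite.pi (fun i : Fin Z => (Set.finite_singleton (1/(N:ℝ))).insert 0))
    intro x hx
    rw [hFhat] at hx
    obtain ⟨-, -, h01⟩ := hx
    intro i _
    rcases h01 i with h | h <;> simp [h]
  set Fs := hFin.toFinset with hFs
  set S := (Fs.filter (fun x => 0 < p x)).image p with hS
  have hSpos : ∀ y ∈ S, 0 < y := by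
    intro y hy
    obtain ⟨x, hx, rfl⟩ := Finset.mem_image.mp hy
    exact (Finset.mem_filter.mp hx).2
  -- choose lamHat
  by_cases hSne : S.Nonempty
  · set φ := S.min' hSne with hφ
    have hφpos : 0 < φ := hSpos _ (S.min'_mem hSne)
    refine ⟨(2*B + 1)/φ, by positivity, ?_⟩
    intro lam hlam xlam hxlamF hmax
    have hlampos : 0 < lam := lt_of_lt_of_le (by positivity) hlam
    have hpzero : p xlam = 0 := by
      by_contra h
      have hppos : 0 < p xlam := lt_of_le_of_ne (hp0 xlam) (Ne.symm h)
      have hmem : p xlam ∈ S := by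
        apply Finset.mem_image_of_mem
        exact Finset.mem_filter.mpr ⟨hFin.mem_toFinset.mpr hxlamF, hppos⟩
      have hφle : φ ≤ p xlam := S.min'_le _ hmem
      have h1 : f lam x0 ≤ f lam xlam := hmax x0 hx0F
      rw [hf] at h1
      simp only at h1
      have h1' : g ⬝ᵥ x0 - lam * p x0 ≤ g ⬝ᵥ xlam - lam * p xlam := h1
      rw [hpx0] at h1'
      have hb1 := (abs_le.mp (hgB x0 hx0F)).2
      have hb0 := (abs_le.mp (hgB x0 hx0F)).1
      have hb2 := (abs_le.mp (hgB xlam hxlamF)).2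
      have hlp : lam * p xlam ≤ 2 * B := by nlinarith
      have hge : (2*B + 1)/φ * φ ≤ lam * p xlam := by
        apply mul_le_mul hlam hφle hφpos.le hlampos.le
      rw [div_mul_cancel₀ _ hφpos.ne'] at hge
      linarith
    have hquad : xlam ⬝ᵥ A *ᵥ xlam ≤ 2 * θ := by
      have := le_max_left (xlam ⬝ᵥ A *ᵥ xlam - 2 * θ) 0
      rw [show max (xlam ⬝ᵥ A *ᵥ xlam - 2 * θ) 0 = p xlam from rfl, hpzero] at this
      linarith
    refine ⟨hquad, ?_⟩
    intro x hxF hxq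
    have hpx : p x = 0 := max_eq_right (by linarith)
    have := hmax x hxF
    rw [hf] at this
    simp only at this
    have h2 : g ⬝ᵥ x - lam * p x ≤ g ⬝ᵥ xlam - lam * p xlam := this
    rw [hpx, hpzero] at h2
    linarith
  · refine ⟨1, one_pos, ?_⟩
    intro lam hlam xlam hxlamF hmax
    have hpzero : p xlam = 0 := by
      by_contra h
      have hppos : 0 < p xlam := lt_of_le_of_ne (hp0 xlam) (Ne.symm h)
      exact hSne ⟨p xlam, Finset.mem_image_of_mem _
        (Finset.mem_filter.mpr ⟨hFin.mem_toFinset.mpr hxlamF, hppos⟩)⟩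
    have hquad : xlam ⬝ᵥ A *ᵥ xlam ≤ 2 * θ := by
      have := le_max_left (xlam ⬝ᵥ A *ᵥ xlam - 2 * θ) 0
      rw [show max (xlam ⬝ᵥ A *ᵥ xlam - 2 * θ) 0 = p xlam from rfl, hpzero] at this
      linarith
    refine ⟨hquad, ?_⟩
    intro x hxF hxq
    have hpx : p x = 0 := max_eq_right (by linarith)
    have := hmax x hxF
    rw [hf] at this
    simp only at this
    have h2 : g ⬝ᵥ x - lam * p x ≤ g ⬝ᵥ xlam - lam * p xlam := this
    rw [hpx, hpzero] at h2
    linarith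
end

section
/- For all y with −1 ≤ y ≤ 1 it holds that arccos(y)/π ≥ α·(1−y)/2, where α := min{ (2/π)·(t/(1−cos t)) : 0 < t ≤ π }. -/
open Real

/-- Goemans–Williamson inequality: with
`α = min{(2/π)·t/(1−cos t) : 0 < t ≤ π}`, for every `y ∈ [−1,1]` one has
`arccos(y)/π ≥ α·(1−y)/2`. -/
theorem arccos_ge_alpha (α : ℝ)
    (hα : IsLeast {a : ℝ | ∃ t : ℝ, 0 < t ∧ t ≤ π ∧
      a = (2 / π) * (t / (1 - Real.cos t))} α) :
    ∀ y : ℝ, -1 ≤ y → y ≤ 1 → Real.arccos y / π ≥ α * (1 - y) / 2 := by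
  intro y hy1 hy2
  rcases eq_or_lt_of_le hy2 with h1 | h1
  · subst h1
    simp [Real.arccos_one]
  · set t := Real.arccos y with ht
    have htpos : 0 < t := Real.arccos_pos.mpr h1
    have htle : t ≤ π := Real.arccos_le_pi y
    have hcos : Real.cos t = y := Real.cos_arccos hy1 hy2
    have hmem : (2 / π) * (t / (1 - Real.cos t)) ∈
        {a : ℝ | ∃ t : ℝ, 0 < t ∧ t ≤ π ∧ a = (2 / π) * (t / (1 - Real.cos t))} :=
      ⟨t, htpos, htle, rfl⟩
    have hle : α ≤ (2 / π) * (t / (1 - y)) := by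
      have := hα.2 hmem
      rwa [hcos] at this
    have hπ : (0:ℝ) < π := Real.pi_pos
    have hy : 0 < 1 - y := by linarith
    have : α * (1 - y) ≤ (2 / π) * (t / (1 - y)) * (1 - y) := by
      exact mul_le_mul_of_nonneg_right hle (le_of_lt hy)
    rw [mul_assoc, div_mul_cancel₀ _ (ne_of_gt hy)] at this
    rw [ge_iff_le, div_le_div_iff₀ (by norm_num : (0:ℝ) < 2) hπ]
    calc α * (1 - y) * π ≤ (2 / π) * t * π := by
          exact mul_le_mul_of_nonneg_right this (le_of_lt hπ)
      _ = t * 2 := by field_simp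
end

section
/- Let Y* be a feasible matrix of the SDP relaxation with Y*_00 = Y*_ii = 1 and Y* ⪰ 0, and let the rounded random variable ỹ_i take value +1 with probability 1 − arccos(Y*_0i)/π and −1 otherwise. Then E[ỹ_i] = 1 − (2/π)·arccos(Y*_0i), and moreover E[ỹ_i] ≤ α·(Y*_0i − 1) + 1 where α = min{(2/π)·t/(1−cos t) : 0 < t ≤ π}. -/
open Real Matrix

lemma key_ineq (y α : ℝ) (h1 : -1 ≤ y) (h2 : y ≤ 1)
    (hα : IsLeast {a : ℝ | ∃ t : ℝ, 0 < t ∧ t ≤ π ∧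
      a = (2 / π) * (t / (1 - Real.cos t))} α) :
    1 - (2 / π) * Real.arccos y ≤ α * (y - 1) + 1 := by
  have key : α * (1 - y) ≤ (2 / π) * Real.arccos y := by
    rcases eq_or_lt_of_le h2 with heq | hlt
    · subst heq; simp [Real.arccos_one]
    · have hcos : Real.cos (Real.arccos y) = y := Real.cos_arccos h1 h2
      have htpos : 0 < Real.arccos y := by
        rcases lt_or_eq_of_le (Real.arccos_nonneg y) with h | h
        · exact h
        · rw [← h, Real.cos_zero] at hcos; linarith
      have htle : Real.arccos y ≤ π := Real.arccos_le_pi y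
      have hαle := hα.2 ⟨Real.arccos y, htpos, htle, rfl⟩
      have hden : 0 < 1 - y := by linarith
      rw [hcos] at hαle
      calc α * (1 - y) ≤ (2 / π) * (Real.arccos y / (1 - y)) * (1 - y) :=
            mul_le_mul_of_nonneg_right hαle hden.le
        _ = (2 / π) * Real.arccos y := by field_simp
  linarith

/-- Expected value of the randomized rounding: if `Y*` is positive semidefinite
with unit diagonal (indices `0,…,n`) and `ỹ_i` takes value `+1` with probability
`1 − arccos(Y*_{0i})/π` and `−1` otherwise, then
`E[ỹ_i] = 1 − (2/π)·arccos(Y*_{0i}) ≤ α·(Y*_{0i} − 1) + 1`. -/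
theorem rounding_expectation (n : ℕ) (Y : Matrix (Fin (n + 1)) (Fin (n + 1)) ℝ)
    (hpsd : Y.PosSemidef) (hdiag : ∀ i, Y i i = 1)
    (α : ℝ)
    (hα : IsLeast {a : ℝ | ∃ t : ℝ, 0 < t ∧ t ≤ π ∧
      a = (2 / π) * (t / (1 - Real.cos t))} α) :
    ∀ i : Fin n,
      1 * (1 - Real.arccos (Y 0 i.succ) / π)
        + (-1) * (1 - (1 - Real.arccos (Y 0 i.succ) / π))
        = 1 - (2 / π) * Real.arccos (Y 0 i.succ) ∧
      1 - (2 / π) * Real.arccos (Y 0 i.succ) ≤ α * (Y 0 i.succ - 1) + 1 := by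
  intro i
  have hsym : Y i.succ 0 = Y 0 i.succ := by
    have h := congrArg (fun M => M i.succ (0 : Fin (n+1))) hpsd.1
    simpa [Matrix.conjTranspose_apply] using h.symm
  have key : ∀ c : ℝ, 0 ≤ Y 0 0 + c * Y 0 i.succ + c * Y i.succ 0 + c * c * Y i.succ i.succ := by
    intro c
    have h := hpsd.dotProduct_mulVec_nonneg (Pi.single (0 : Fin (n+1)) 1 + Pi.single i.succ c)
    have hne : i.succ ≠ (0 : Fin (n+1)) := Fin.succ_ne_zero i
    have expand : star (Pi.single (0 : Fin (n+1)) (1:ℝ) + Pi.single i.succ c) ⬝ᵥ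
        Y *ᵥ (Pi.single (0 : Fin (n+1)) (1:ℝ) + Pi.single i.succ c)
        = Y 0 0 + c * Y 0 i.succ + c * Y i.succ 0 + c * c * Y i.succ i.succ := by
      simp [Matrix.mulVec_add, Matrix.mulVec_single, add_dotProduct,
        single_dotProduct, dotProduct_add, star_add]
      ring
    rw [expand] at h
    exact h
  have h1 : -1 ≤ Y 0 i.succ := by
    have := key 1
    rw [hdiag, hdiag, hsym] at this
    linarith
  have h2 : Y 0 i.succ ≤ 1 := by
    have := key (-1)
    rw [hdiag, hdiag, hsym] at this
    linarith
  exact ⟨by ring, key_ineq _ _ h1 h2 hα⟩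
end

section
/- Under Assumption A (the inequality S_{N̂}(Â_Ŵ) ≤ (2θ̄ − 2·trace(A_VV) + eᵀA_VV e − 2c̄ᵀŷ)/4), the optimal value of the LP: minimize A_VV·Y subject to (e eᵀ)·Y = N̄², Y_ii = 1 for all i ∈ V, and −1 ≤ Y_ij ≤ 1 for i<j, equals ρ_LP = 4·S_{N̂}(Â_Ŵ) − eᵀ A_VV e + 2·trace(A_VV), where N̂ = (N̄² + |V|² − 2|V|)/4. -/
open Matrix BigOperators Finset

lemma exists_min_subset {α : Type*} [DecidableEq α] (W : Finset α) (g : α → ℝ) :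
    ∀ n ≤ W.card, ∃ T ⊆ W, T.card = n ∧ ∀ p ∈ T, ∀ q ∈ W \ T, g p ≤ g q := by
  intro n
  induction n with
  | zero => intro _; exact ⟨∅, empty_subset _, rfl, by simp⟩
  | succ n ih =>
    intro hn
    obtain ⟨T, hTW, hTc, hmin⟩ := ih (Nat.le_of_succ_le hn)
    have hne : (W \ T).Nonempty := by
      rw [← Finset.card_pos, Finset.card_sdiff_of_subset hTW]; omega
    obtain ⟨q, hq, hqmin⟩ := (W \ T).exists_min_image g hne
    refine ⟨insert q T, Finset.insert_subset (Finset.mem_sdiff.mp hq).1 hTW, ?_, ?_⟩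
    · rw [Finset.card_insert_of_notMem (Finset.mem_sdiff.mp hq).2, hTc]
    · intro p hp r hr
      have hrT : r ∈ W \ T := by
        rw [Finset.mem_sdiff] at hr ⊢
        exact ⟨hr.1, fun h => hr.2 (Finset.mem_insert_of_mem h)⟩
      rcases Finset.mem_insert.mp hp with h | h
      · exact h ▸ hqmin r hrT
      · exact hmin p h r hrT

lemma sum_split (v : ℕ) (g : Fin v → Fin v → ℝ) (hg : ∀ i j, g i j = g j i) :
    ∑ i, ∑ j, g i j = (∑ i, g i i)
      + 2 * ∑ p ∈ Finset.univ.filter (fun p : Fin v × Fin v => p.1 < p.2), g p.1 p.2 := by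
  have h0 : ∑ i, ∑ j, g i j = ∑ p : Fin v × Fin v, g p.1 p.2 := by
    rw [Fintype.sum_prod_type]
  have h1 : ∑ p : Fin v × Fin v, g p.1 p.2
      = ∑ p ∈ Finset.univ.filter (fun p : Fin v × Fin v => p.1 < p.2), g p.1 p.2
      + ∑ p ∈ Finset.univ.filter (fun p : Fin v × Fin v => ¬ p.1 < p.2), g p.1 p.2 := by
    rw [Finset.sum_filter_add_sum_filter_not]
  have h2 : ∑ p ∈ Finset.univ.filter (fun p : Fin v × Fin v => ¬ p.1 < p.2), g p.1 p.2
      = ∑ p ∈ Finset.univ.filter (fun p : Fin v × Fin v => p.2 < p.1), g p.1 p.2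
      + ∑ i, g i i := by
    rw [← Finset.sum_filter_add_sum_filter_not
      (Finset.univ.filter (fun p : Fin v × Fin v => ¬ p.1 < p.2))
      (fun p : Fin v × Fin v => p.2 < p.1)]
    congr 1
    · apply Finset.sum_congr _ (fun _ _ => rfl)
      rw [Finset.filter_filter]
      apply Finset.filter_congr
      intro p _
      first
      | exact ⟨fun h => ⟨lt_asymm h, h⟩, fun h => h.2⟩
      | exact ⟨fun h => h.2, fun h => ⟨lt_asymm h, h⟩⟩
    · rw [Finset.filter_filter]
      rw [Finset.sum_nbij' (i := fun p : Fin v × Fin v => p.1) (j := fun i => (i, i))]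
      · intro p hp
        simp only [Finset.mem_filter] at hp
        exact Finset.mem_univ _
      · intro i _
        simp only [Finset.mem_filter, Finset.mem_univ, true_and]
        omega
      · intro p hp
        simp only [Finset.mem_filter] at hp
        have h12 : p.1 = p.2 := by omega
        exact Prod.ext rfl h12
      · intro i _
        rfl
      · intro p hp
        simp only [Finset.mem_filter] at hp
        have : p.2 = p.1 := by omega
        rw [this]
  have h3 : ∑ p ∈ Finset.univ.filter (fun p : Fin v × Fin v => p.2 < p.1), g p.1 p.2
      = ∑ p ∈ Finset.univ.filter (fun p : Fin v × Fin v => p.1 < p.2), g p.1 p.2 := by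
    rw [Finset.sum_nbij' (i := Prod.swap) (j := Prod.swap)]
    · intro p hp; simp only [Finset.mem_filter] at hp ⊢; exact ⟨Finset.mem_univ _, hp.2⟩
    · intro p hp; simp only [Finset.mem_filter] at hp ⊢; exact ⟨Finset.mem_univ _, hp.2⟩
    · intro p _; exact Prod.swap_swap p
    · intro p _; exact Prod.swap_swap p
    · intro p _; exact (hg p.1 p.2)
  rw [h0, h1, h2, h3]; ring


/-- Under Assumption A, the LP
`min A_VV·Y s.t. (e eᵀ)·Y = N̄², Y_ii = 1, −1 ≤ Y_ij ≤ 1 (i<j)` has optimal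
value `ρ_LP = 4·S_{N̂}(Â_Ŵ) − eᵀA_VV e + 2·trace(A_VV)`, where `S_{N̂}(Â_Ŵ)` is
the sum of the `N̂` smallest strictly-upper-triangular entries of `A_VV`
(characterized as the least sum over subsets of `Ŵ` of cardinality `N̂`) and
`N̂ = (N̄² + |V|² − 2|V|)/4`. -/
theorem lp_feas_optimal_value (v : ℕ) (A : Matrix (Fin v) (Fin v) ℝ)
    (hAsym : A.IsSymm)
    (What : Finset (Fin v × Fin v))
    (hWhat : What = Finset.univ.filter (fun p : Fin v × Fin v => p.1 < p.2))
    (Nhat : ℕ) (Nbar : ℝ)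
    (hNhat : (Nhat : ℝ) = (Nbar ^ 2 + (v : ℝ) ^ 2 - 2 * v) / 4)
    (S : ℝ)
    (hS : IsLeast {t : ℝ | ∃ T ⊆ What, T.card = Nhat ∧
      t = ∑ p ∈ T, A p.1 p.2} S)
    (θbar : ℝ) (cbar yhat : Fin v → ℝ)
    (hAssumptionA : S ≤ (2 * θbar - 2 * (∑ i, A i i)
      + (∑ i, ∑ j, A i j) - 2 * (cbar ⬝ᵥ yhat)) / 4) :
    IsLeast {t : ℝ | ∃ Y : Matrix (Fin v) (Fin v) ℝ, Y.IsSymm ∧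
        (∑ i, ∑ j, Y i j) = Nbar ^ 2 ∧ (∀ i, Y i i = 1) ∧
        (∀ i j : Fin v, i < j → -1 ≤ Y i j ∧ Y i j ≤ 1) ∧
        t = ∑ i, ∑ j, A i j * Y i j}
      (4 * S - (∑ i, ∑ j, A i j) + 2 * (∑ i, A i i)) := by
  subst hWhat
  set W := Finset.univ.filter (fun p : Fin v × Fin v => p.1 < p.2) with hW
  have hAapp : ∀ i j, A i j = A j i := fun i j => (hAsym.apply i j).symm
  -- card of W
  have hcard : 2 * (W.card : ℝ) = (v : ℝ) ^ 2 - v := by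
    have h := sum_split v (fun _ _ => (1 : ℝ)) (fun _ _ => rfl)
    simp only [Finset.sum_const, Finset.card_univ, Fintype.card_fin, nsmul_eq_mul,
      mul_one] at h
    push_cast at h
    nlinarith [h]
  -- trace identity
  have hA2W : 2 * ∑ p ∈ W, A p.1 p.2 = (∑ i, ∑ j, A i j) - ∑ i, A i i := by
    have h := sum_split v (fun i j => A i j) hAapp
    linarith [h]
  constructor
  · -- membership: construct the optimal Y
    obtain ⟨T, hTW, hTc, hTS⟩ := hS.1
    set Y : Matrix (Fin v) (Fin v) ℝ :=
      Matrix.of (fun i j => if i = j then 1 else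
        (if (i, j) ∈ T ∨ (j, i) ∈ T then 1 else -1)) with hYdef
    have hYs : ∀ i j, Y i j = Y j i := by
      intro i j
      simp only [hYdef, Matrix.of_apply]
      by_cases h : i = j
      · simp [h]
      · simp only [if_neg h, if_neg (Ne.symm h)]
        exact if_congr or_comm rfl rfl
    have hTlt : ∀ p ∈ T, p.1 < p.2 := by
      intro p hp
      exact (Finset.mem_filter.mp (hTW hp)).2
    have hYW : ∀ p ∈ W, Y p.1 p.2 = if p ∈ T then 1 else -1 := by
      intro p hp
      have hlt : p.1 < p.2 := (Finset.mem_filter.mp hp).2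
      have hne : p.1 ≠ p.2 := ne_of_lt hlt
      have hswap : (p.2, p.1) ∉ T := by
        intro h
        exact absurd hlt (lt_asymm (hTlt _ h))
      simp only [hYdef, Matrix.of_apply, if_neg hne, Prod.mk.eta]
      by_cases hT : p ∈ T
      · simp [hT]
      · simp [hT, hswap]
    have hYdiag : ∀ i, Y i i = 1 := by
      intro i; simp [hYdef]
    -- sum of Y over W
    have hsumW : ∑ p ∈ W, Y p.1 p.2 = 2 * (Nhat : ℝ) - W.card := by
      rw [Finset.sum_congr rfl hYW]
      have step : ∀ p ∈ W, (if p ∈ T then (1 : ℝ) else -1)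
          = 2 * (if p ∈ T then (1 : ℝ) else 0) - 1 := by
        intro p _; by_cases h : p ∈ T <;> simp [h] <;> norm_num
      rw [Finset.sum_congr rfl step, Finset.sum_sub_distrib, ← Finset.mul_sum,
        Finset.sum_ite_mem, Finset.inter_eq_right.mpr hTW, Finset.sum_const,
        Finset.sum_const, hTc]
      simp
    -- sum of A*Y over W
    have hAYW : ∑ p ∈ W, A p.1 p.2 * Y p.1 p.2
        = 2 * S - ∑ p ∈ W, A p.1 p.2 := by
      have step : ∀ p ∈ W, A p.1 p.2 * Y p.1 p.2
          = 2 * (if p ∈ T then A p.1 p.2 else 0) - A p.1 p.2 := by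
        intro p hp
        rw [hYW p hp]
        by_cases h : p ∈ T <;> simp [h] <;> ring
      rw [Finset.sum_congr rfl step, Finset.sum_sub_distrib, ← Finset.mul_sum,
        Finset.sum_ite_mem, Finset.inter_eq_right.mpr hTW, ← hTS]
    refine ⟨Y, Matrix.IsSymm.ext (fun i j => hYs j i), ?_, hYdiag, ?_, ?_⟩
    · have h := sum_split v (fun i j => Y i j) hYs
      have hdiag : ∑ i, Y i i = (v : ℝ) := by
        rw [Finset.sum_congr rfl (fun i _ => hYdiag i)]
        simp
      rw [h, hdiag, hsumW]
      push_cast [hNhat]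
      linarith
    · intro i j hij
      have hp : (i, j) ∈ W := by
        simp only [hW, Finset.mem_filter, Finset.mem_univ, true_and]
        exact hij
      have := hYW (i, j) hp
      simp only at this
      rw [this]
      by_cases h : (i, j) ∈ T <;> simp [h]
    · have h := sum_split v (fun i j => A i j * Y i j)
        (fun i j => by show A i j * Y i j = A j i * Y j i; rw [hAapp i j, hYs i j])
      have hdiag : ∑ i, A i i * Y i i = ∑ i, A i i := by
        apply Finset.sum_congr rfl
        intro i _; rw [hYdiag i, mul_one]
      rw [h, hdiag, hAYW]
      linarith
  · -- lower bound
    rintro t ⟨Y, hYsym, hYsum, hYdiag, hYbd, rfl⟩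
    have hYs : ∀ i j, Y i j = Y j i := fun i j => (hYsym.apply i j).symm
    set X : Fin v × Fin v → ℝ := fun p => (Y p.1 p.2 + 1) / 2 with hXdef
    have hXbd : ∀ p ∈ W, 0 ≤ X p ∧ X p ≤ 1 := by
      intro p hp
      have hlt : p.1 < p.2 := (Finset.mem_filter.mp hp).2
      obtain ⟨h1, h2⟩ := hYbd p.1 p.2 hlt
      constructor <;> simp only [hXdef] <;> linarith
    have hYWsum : (Nbar : ℝ) ^ 2 = (v : ℝ) + 2 * ∑ p ∈ W, Y p.1 p.2 := by
      have h := sum_split v (fun i j => Y i j) hYs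
      have hdiag : ∑ i, Y i i = (v : ℝ) := by
        rw [Finset.sum_congr rfl (fun i _ => hYdiag i)]
        simp
      rw [← hYsum, h, hdiag]
    have hXsum : ∑ p ∈ W, X p = (Nhat : ℝ) := by
      have h4 : ∑ p ∈ W, X p = ((∑ p ∈ W, Y p.1 p.2) + W.card) / 2 := by
        simp only [hXdef]
        rw [← Finset.sum_div, Finset.sum_add_distrib, Finset.sum_const,
          nsmul_eq_mul, mul_one]
      rw [h4, hNhat]
      linarith
    have hNle : Nhat ≤ W.card := by
      obtain ⟨T0, hT0W, hT0c, _⟩ := hS.1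
      exact hT0c ▸ Finset.card_le_card hT0W
    obtain ⟨T, hTW, hTc, hmin⟩ := exists_min_subset W (fun p => A p.1 p.2) Nhat hNle
    have hsplit : ∑ p ∈ W \ T, X p + ∑ p ∈ T, X p = ∑ p ∈ W, X p :=
      Finset.sum_sdiff hTW
    have hAsplit : ∑ p ∈ W \ T, A p.1 p.2 * X p + ∑ p ∈ T, A p.1 p.2 * X p
        = ∑ p ∈ W, A p.1 p.2 * X p := Finset.sum_sdiff hTW
    -- key inequality : S ≤ ∑_W A X
    have hkey : S ≤ ∑ p ∈ W, A p.1 p.2 * X p := by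
      have hST : S ≤ ∑ p ∈ T, A p.1 p.2 := hS.2 ⟨T, hTW, hTc, rfl⟩
      rcases T.eq_empty_or_nonempty with hTe | hTne
      · -- Nhat = 0, all X = 0
        have hN0 : (Nhat : ℝ) = 0 := by
          rw [← hTc, hTe]; simp
        have hX0 : ∀ p ∈ W, X p = 0 := by
          have := (Finset.sum_eq_zero_iff_of_nonneg
            (fun p hp => (hXbd p hp).1)).mp (by rw [hXsum, hN0])
          exact this
        have : ∑ p ∈ W, A p.1 p.2 * X p = 0 := by
          apply Finset.sum_eq_zero
          intro p hp; rw [hX0 p hp, mul_zero]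
        rw [this]
        rw [hTe] at hST
        simpa using hST
      · obtain ⟨p0, hp0, hp0max⟩ := T.exists_max_image (fun p => A p.1 p.2) hTne
        set τ : ℝ := A p0.1 p0.2 with hτ
        have hb1 : ∑ p ∈ T, (A p.1 p.2 + τ * (X p - 1)) ≤ ∑ p ∈ T, A p.1 p.2 * X p := by
          apply Finset.sum_le_sum
          intro p hp
          have h1 : A p.1 p.2 ≤ τ := hp0max p hp
          have h2 : X p ≤ 1 := (hXbd p (hTW hp)).2
          nlinarith
        have hb2 : ∑ p ∈ W \ T, τ * X p ≤ ∑ p ∈ W \ T, A p.1 p.2 * X p := by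
          apply Finset.sum_le_sum
          intro p hp
          have h1 : τ ≤ A p.1 p.2 := hmin p0 hp0 p hp
          have h2 : 0 ≤ X p := (hXbd p (Finset.mem_sdiff.mp hp).1).1
          nlinarith
        have e1 : ∑ p ∈ T, (A p.1 p.2 + τ * (X p - 1))
            = ∑ p ∈ T, A p.1 p.2 + τ * (∑ p ∈ T, X p) - τ * Nhat := by
          rw [Finset.sum_add_distrib]
          have : ∑ p ∈ T, τ * (X p - 1) = τ * (∑ p ∈ T, X p) - τ * T.card := by
            rw [← Finset.mul_sum, Finset.sum_sub_distrib, Finset.sum_const,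
              nsmul_eq_mul, mul_one, mul_sub]
          rw [this, hTc]
          ring
        have e2 : ∑ p ∈ W \ T, τ * X p = τ * ∑ p ∈ W \ T, X p := by
          rw [Finset.mul_sum]
        have e3 : τ * (∑ p ∈ T, X p) - τ * Nhat + τ * ∑ p ∈ W \ T, X p = 0 := by
          have : ∑ p ∈ W \ T, X p = (Nhat : ℝ) - ∑ p ∈ T, X p := by
            rw [← hXsum, ← hsplit]; ring
          rw [this]; ring
        linarith
    -- conclude
    have h := sum_split v (fun i j => A i j * Y i j)
      (fun i j => by show A i j * Y i j = A j i * Y j i; rw [hAapp i j, hYs i j])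
    have hdiag : ∑ i, A i i * Y i i = ∑ i, A i i := by
      apply Finset.sum_congr rfl
      intro i _; rw [hYdiag i, mul_one]
    have hrel : ∑ p ∈ W, A p.1 p.2 * Y p.1 p.2
        = 2 * (∑ p ∈ W, A p.1 p.2 * X p) - ∑ p ∈ W, A p.1 p.2 := by
      have step : ∀ p ∈ W, A p.1 p.2 * Y p.1 p.2
          = 2 * (A p.1 p.2 * X p) - A p.1 p.2 := by
        intro p _
        simp only [hXdef]
        ring
      rw [Finset.sum_congr rfl step, Finset.sum_sub_distrib, ← Finset.mul_sum]
    rw [h, hdiag, hrel]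
    linarith
end
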